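/- Let Δ ≥ 2 and let G be a connected infinite Δ-regular graph. For every q with 0 < q < 1/Δ, strategy A becomes epidemic in the A–B coordination game (G, q); moreover, it suffices to take the initial set S₀ to be a single vertex. -/
import Mathlib


namespace Contagion

open scoped BigOperators

/-- The three strategies in the contagion game. -/
inductive Strat
  | A | B | AB
deriving DecidableEq

/-- Pairwise payoff to a player using the first strategy against a neighbor
using the second strategy, in the contagion game with parameters `q, r`. -/
noncomputable def pairPayoff (q r : ℝ) : Strat → Strat → ℝ
  | .A, .A => 1 - q
  | .A, .B => 0
  | .A, .AB => 1 - q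
  | .B, .A => 0
  | .B, .B => q
  | .B, .AB => q
  | .AB, .A => 1 - q - r
  | .AB, .B => q - r
  | .AB, .AB => max q (1 - q) - r

variable {V : Type*}

/-- Total payoff to vertex `v` for playing strategy `s` against profile `σ`. -/
noncomputable def totalPayoff (G : SimpleGraph V) (q r : ℝ) (σ : V → Strat)
    (v : V) (s : Strat) : ℝ :=
  ∑ᶠ u ∈ G.neighborSet v, pairPayoff q r s (σ u)

/-- `s` is a best response of vertex `v` to the profile `σ`. -/
def IsBestResponse (G : SimpleGraph V) (q r : ℝ) (σ : V → Strat) (v : V) (s : Strat) : Prop :=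
  ∀ s' : Strat, totalPayoff G q r σ v s' ≤ totalPayoff G q r σ v s

/-- Strategy `A` becomes epidemic in the contagion game `(G, q, r)`:
there are a finite initial set `S₀` (playing `A`, everybody else playing `B`) and a
sequence `α` of vertices in which every vertex appears at least once, such that updating
at step `n` the vertex `α n` to a best response makes every vertex eventually adopt `A`. -/
def Epidemic (G : SimpleGraph V) (q r : ℝ) : Prop :=
  ∃ (S₀ : Set V) (α : ℕ → V) (σ : ℕ → V → Strat),
    S₀.Finite ∧
    Function.Surjective α ∧
    (∀ v ∈ S₀, σ 0 v = Strat.A) ∧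
    (∀ v ∉ S₀, σ 0 v = Strat.B) ∧
    (∀ n, IsBestResponse G q r (σ n) (α n) (σ (n + 1) (α n))) ∧
    (∀ n v, v ≠ α n → σ (n + 1) v = σ n v) ∧
    (∀ v, ∃ n, σ n v = Strat.A)

/-- The epidemic region `Ω_G ⊆ ℝ²` of `G`. -/
def epidemicRegion (G : SimpleGraph V) : Set (ℝ × ℝ) :=
  {p | 0 < p.1 ∧ p.1 < 1 ∧ 0 < p.2 ∧ Epidemic G p.1 p.2}

/-- `G` is `Δ`-regular: every vertex has exactly `Δ` neighbors. -/
def IsRegular (G : SimpleGraph V) (Δ : ℕ) : Prop :=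
  ∀ v, (G.neighborSet v).ncard = Δ

/-- The number of neighbors of `v` lying in the set `S`. -/
noncomputable def degIn (G : SimpleGraph V) (v : V) (S : Set V) : ℕ :=
  (G.neighborSet v ∩ S).ncard

/-- `RT Δ`: the infinite rooted tree in which the root (the empty list) has `Δ - 1`
children and every other vertex also has `Δ - 1` children (hence degree `Δ`). -/
def RT (Δ : ℕ) : SimpleGraph (List (Fin (Δ - 1))) :=
  SimpleGraph.fromRel (fun l l' => ∃ a : Fin (Δ - 1), l' = a :: l)

/-- `G` contains a subgraph isomorphic to `RT Δ`. -/
def HasRTCopy (Δ : ℕ) (G : SimpleGraph V) : Prop :=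
  ∃ f : List (Fin (Δ - 1)) → V,
    Function.Injective f ∧ ∀ x y, (RT Δ).Adj x y → G.Adj (f x) (f y)

/-- The thick half line `HL_Δ` (for even `Δ`), columns indexed by `ℕ` starting with the
first column `0`; `(k, i)` and `(l, j)` are adjacent exactly when `|k - l| = 1`. -/
def HL (Δ : ℕ) : SimpleGraph (ℕ × Fin (Δ / 2)) :=
  SimpleGraph.fromRel (fun x y => y.1 = x.1 + 1)

/-- The epidemic region of the infinite `Δ`-regular tree:
`{(q,r) : q,r > 0, r ≥ ((Δ-1)/Δ)q, q ≤ 1/Δ} ∪ {(q,r) : q,r > 0, 2q + Δr ≤ 1}`. -/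
def treeRegion (Δ : ℕ) : Set (ℝ × ℝ) :=
  {p | 0 < p.1 ∧ 0 < p.2 ∧ ((Δ : ℝ) - 1) / Δ * p.1 ≤ p.2 ∧ p.1 ≤ 1 / Δ} ∪
  {p | 0 < p.1 ∧ 0 < p.2 ∧ 2 * p.1 + Δ * p.2 ≤ 1}

/-- The epidemic region of the thick line `L_Δ`:
`{(q,r) : 0 < q ≤ 1/2, r ≥ q/2} ∪ {(q,r) : q,r > 0, r ≤ q/2, 2q + 2r ≤ 1}`. -/
def thickLineRegion : Set (ℝ × ℝ) :=
  {p | 0 < p.1 ∧ p.1 ≤ 1 / 2 ∧ p.1 / 2 ≤ p.2} ∪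
  {p | 0 < p.1 ∧ 0 < p.2 ∧ p.2 ≤ p.1 / 2 ∧ 2 * p.1 + 2 * p.2 ≤ 1}

/-- `(SAB, SB)` is a blocking structure for the contagion game `(G, q, r)`
on a `Δ`-regular graph `G`. -/
def IsBlockingStructure (G : SimpleGraph V) (Δ : ℕ) (q r : ℝ) (SAB SB : Set V) : Prop :=
  Disjoint SAB SB ∧ (SAB.Nonempty ∨ SB.Nonempty) ∧
  (∀ v ∈ SAB, r / q * Δ < (degIn G v SB : ℝ)) ∧
  ∀ v ∈ SB,
    (1 - q - r) * Δ < (1 - q) * (degIn G v SB : ℝ) + min q (1 - q) * (degIn G v SAB : ℝ) ∧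
    (1 - q) * Δ < (degIn G v SB : ℝ) + q * (degIn G v SAB : ℝ)

/-- The two strategies of the `A`-`B` coordination game. -/
inductive CStrat
  | A | B
deriving DecidableEq

/-- Pairwise payoff in the `A`-`B` coordination game `(G, q)`. -/
noncomputable def cPairPayoff (q : ℝ) : CStrat → CStrat → ℝ
  | .A, .A => 1 - q
  | .A, .B => 0
  | .B, .A => 0
  | .B, .B => q

/-- Total payoff to `v` for playing `s` against profile `σ` in the coordination game. -/
noncomputable def cTotalPayoff (G : SimpleGraph V) (q : ℝ) (σ : V → CStrat)
    (v : V) (s : CStrat) : ℝ :=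
  ∑ᶠ u ∈ G.neighborSet v, cPairPayoff q s (σ u)

/-- `s` is a best response of `v` to `σ` in the coordination game. -/
def CIsBestResponse (G : SimpleGraph V) (q : ℝ) (σ : V → CStrat) (v : V) (s : CStrat) : Prop :=
  ∀ s' : CStrat, cTotalPayoff G q σ v s' ≤ cTotalPayoff G q σ v s

/-- Strategy `A` becomes epidemic in the coordination game `(G, q)` starting from the
initial set `S₀`. -/
def CoordEpidemicFrom (G : SimpleGraph V) (q : ℝ) (S₀ : Set V) : Prop :=
  ∃ (α : ℕ → V) (σ : ℕ → V → CStrat),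
    Function.Surjective α ∧
    (∀ v ∈ S₀, σ 0 v = CStrat.A) ∧
    (∀ v ∉ S₀, σ 0 v = CStrat.B) ∧
    (∀ n, CIsBestResponse G q (σ n) (α n) (σ (n + 1) (α n))) ∧
    (∀ n v, v ≠ α n → σ (n + 1) v = σ n v) ∧
    (∀ v, ∃ n, σ n v = CStrat.A)

/-- Strategy `A` becomes epidemic in the coordination game `(G, q)`. -/
def CoordEpidemic (G : SimpleGraph V) (q : ℝ) : Prop :=
  ∃ S₀ : Set V, S₀.Finite ∧ CoordEpidemicFrom G q S₀

/-! ### Auxiliary material for Statement 15 -/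

lemma aux_cPairPayoff_A (q : ℝ) (s : CStrat) :
    cPairPayoff q .A s = if s = .A then (1 - q) else 0 := by
  cases s <;> simp [cPairPayoff]

lemma aux_cPairPayoff_B (q : ℝ) (s : CStrat) :
    cPairPayoff q .B s = if s = .A then 0 else q := by
  cases s <;> simp [cPairPayoff]

lemma aux_cTotalPayoff_A (G : SimpleGraph V) (q : ℝ) (σ : V → CStrat) (v : V)
    (hfin : (G.neighborSet v).Finite) :
    cTotalPayoff G q σ v .A
      = (1 - q) * (hfin.toFinset.filter (fun u => σ u = .A)).card := by
  classical
  rw [cTotalPayoff, finsum_mem_eq_finite_toFinset_sum _ hfin]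
  have : ∀ u ∈ hfin.toFinset, cPairPayoff q .A (σ u)
      = if σ u = .A then (1 - q) else 0 := fun u _ => aux_cPairPayoff_A q (σ u)
  rw [Finset.sum_congr rfl this, ← Finset.sum_filter, Finset.sum_const, nsmul_eq_mul, mul_comm]

lemma aux_cTotalPayoff_B (G : SimpleGraph V) (q : ℝ) (σ : V → CStrat) (v : V)
    (hfin : (G.neighborSet v).Finite) :
    cTotalPayoff G q σ v .B
      = q * (hfin.toFinset.filter (fun u => ¬ σ u = .A)).card := by
  classical
  rw [cTotalPayoff, finsum_mem_eq_finite_toFinset_sum _ hfin]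
  have : ∀ u ∈ hfin.toFinset, cPairPayoff q .B (σ u)
      = if ¬ σ u = .A then q else 0 := by
    intro u _
    rw [aux_cPairPayoff_B]
    by_cases h : σ u = CStrat.A <;> simp [h]
  rw [Finset.sum_congr rfl this, ← Finset.sum_filter, Finset.sum_const, nsmul_eq_mul, mul_comm]

lemma aux_bestResponse_A (G : SimpleGraph V) {Δ : ℕ} {q : ℝ} (σ : V → CStrat) (v : V)
    (hΔ : 1 ≤ Δ) (hcard : (G.neighborSet v).ncard = Δ) (hq0 : 0 ≤ q) (hq : q * Δ < 1)
    (hA : ∃ u ∈ G.neighborSet v, σ u = .A) :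
    CIsBestResponse G q σ v .A := by
  classical
  have hfin : (G.neighborSet v).Finite := by
    by_contra h
    rw [Set.Infinite.ncard h] at hcard; omega
  intro s'
  have hab : ((hfin.toFinset.filter (fun u => σ u = .A)).card : ℕ)
      + (hfin.toFinset.filter (fun u => ¬ σ u = .A)).card = Δ := by
    rw [Finset.card_filter_add_card_filter_not,
      ← Set.ncard_eq_toFinset_card _ hfin, hcard]
  have ha : 1 ≤ (hfin.toFinset.filter (fun u => σ u = .A)).card := by
    obtain ⟨u, hu, huA⟩ := hA
    exact Finset.card_pos.mpr ⟨u, Finset.mem_filter.mpr ⟨hfin.mem_toFinset.mpr hu, huA⟩⟩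
  cases s' with
  | A => exact le_refl _
  | B =>
    rw [aux_cTotalPayoff_A G q σ v hfin, aux_cTotalPayoff_B G q σ v hfin]
    set a := (hfin.toFinset.filter (fun u => σ u = .A)).card
    set b := (hfin.toFinset.filter (fun u => ¬ σ u = .A)).card
    have h1 : (a : ℝ) + b = Δ := by exact_mod_cast hab
    have h2 : (1 : ℝ) ≤ a := by exact_mod_cast ha
    nlinarith [mul_nonneg hq0 (sub_nonneg.mpr h2)]

lemma aux_bestResponse_B (G : SimpleGraph V) {Δ : ℕ} {q : ℝ} (σ : V → CStrat) (v : V)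
    (hΔ : 1 ≤ Δ) (hcard : (G.neighborSet v).ncard = Δ) (hq0 : 0 ≤ q)
    (hA : ¬ ∃ u ∈ G.neighborSet v, σ u = .A) :
    CIsBestResponse G q σ v .B := by
  classical
  have hfin : (G.neighborSet v).Finite := by
    by_contra h
    rw [Set.Infinite.ncard h] at hcard; omega
  intro s'
  have hempty : (hfin.toFinset.filter (fun u => σ u = .A)) = ∅ := by
    rw [Finset.filter_eq_empty_iff]
    intro u hu huA
    exact hA ⟨u, hfin.mem_toFinset.mp hu, huA⟩
  cases s' with
  | A =>
    rw [aux_cTotalPayoff_A G q σ v hfin, aux_cTotalPayoff_B G q σ v hfin, hempty]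
    simp only [Finset.card_empty, Nat.cast_zero, mul_zero]
    positivity
  | B => exact le_refl _

lemma aux_walk_mem (G : SimpleGraph V) (S : ℕ → Set V)
    (hsucc : ∀ k, S (k + 1) = S k ∪ ⋃ u ∈ S k, G.neighborSet u) :
    ∀ {x y : V} (p : G.Walk x y), y ∈ S 0 → x ∈ S p.length := by
  intro x y p
  induction p with
  | nil => intro h; simpa using h
  | cons h p ih =>
    intro h0
    rw [SimpleGraph.Walk.length_cons, hsucc]
    exact Or.inr (Set.mem_biUnion (ih h0) h.symm)

lemma aux_walk_prop (G : SimpleGraph V) (P : V → Prop)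
    (hstep : ∀ u v, G.Adj u v → P v → P u) :
    ∀ {x y : V} (p : G.Walk x y), P y → P x := by
  intro x y p
  induction p with
  | nil => exact id
  | cons h _ ih => exact fun hy => hstep _ _ h (ih hy)

open Classical in
/-- Update the profile `τ` at vertex `x` by a best response in the small-`q` regime. -/
noncomputable def nextProfile (G : SimpleGraph V) (τ : V → CStrat) (x : V) : V → CStrat :=
  fun v => if v = x then
    (if ∃ u ∈ G.neighborSet x, τ u = CStrat.A then CStrat.A else CStrat.B)
  else τ v

open Classical in
/-- The sequence of profiles obtained by updating along `α`, starting from `{v₀}` playing A. -/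
noncomputable def profileSeq (G : SimpleGraph V) (v₀ : V) (α : ℕ → V) : ℕ → V → CStrat
  | 0 => fun v => if v = v₀ then CStrat.A else CStrat.B
  | n + 1 => nextProfile G (profileSeq G v₀ α n) (α n)

/-- In the `A`-`B` coordination game `(G, q)` on a connected infinite
`Δ`-regular graph with `0 < q < 1/Δ`, strategy `A` becomes epidemic; moreover it suffices
to take the initial set to be a single vertex. -/
theorem coord_epidemic_of_small_q {V : Type*} (Δ : ℕ) (hΔ : 2 ≤ Δ)
    (G : SimpleGraph V) (hInf : Infinite V) (hConn : G.Connected) (hReg : IsRegular G Δ)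
    (q : ℝ) (hq0 : 0 < q) (hq : q < 1 / Δ) :
    CoordEpidemic G q ∧ ∃ v₀ : V, CoordEpidemicFrom G q ({v₀} : Set V) := by
  classical
  haveI := hInf
  -- basic numeric facts
  have hΔ1 : 1 ≤ Δ := by omega
  have hΔpos : (0 : ℝ) < Δ := by exact_mod_cast (by omega : 0 < Δ)
  have hqΔ : q * Δ < 1 := by
    have := (lt_div_iff₀ hΔpos).mp hq
    linarith
  have hnbrFin : ∀ v : V, (G.neighborSet v).Finite := by
    intro v; by_contra h
    have := Set.Infinite.ncard (s := G.neighborSet v) h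
    rw [hReg v] at this; omega
  -- choose a vertex and a neighbor
  obtain ⟨v₀⟩ : Nonempty V := inferInstance
  obtain ⟨w, hw⟩ : (G.neighborSet v₀).Nonempty :=
    Set.nonempty_of_ncard_ne_zero (by rw [hReg v₀]; omega)
  have hadj : G.Adj v₀ w := hw
  have hwne : w ≠ v₀ := (G.ne_of_adj hadj).symm
  -- countability of V via growing finite balls
  let S : ℕ → Set V := fun k =>
    Nat.rec ({v₀} : Set V) (fun _ Sk => Sk ∪ ⋃ u ∈ Sk, G.neighborSet u) k
  have hS0 : S 0 = {v₀} := rfl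
  have hSsucc : ∀ k, S (k + 1) = S k ∪ ⋃ u ∈ S k, G.neighborSet u := fun _ => rfl
  have hSfin : ∀ k, (S k).Finite := by
    intro k; induction k with
    | zero => rw [hS0]; exact Set.finite_singleton _
    | succ k ih =>
      rw [hSsucc]
      exact ih.union (Set.Finite.biUnion ih fun u _ => hnbrFin u)
  have hScover : ∀ v : V, ∃ k, v ∈ S k := by
    intro v
    refine (hConn v v₀).elim fun p => ⟨p.length, ?_⟩
    exact aux_walk_mem G S hSsucc p (by rw [hS0]; exact rfl)
  haveI : Countable V := by
    refine Set.countable_univ_iff.mp ?_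
    refine Set.Countable.mono (fun v _ => ?_) (Set.countable_iUnion fun k => (hSfin k).countable)
    exact Set.mem_iUnion.mpr (hScover v)
  obtain ⟨e, he⟩ := exists_surjective_nat V
  -- the update sequence: first w, then an enumeration hitting every vertex infinitely often
  let α : ℕ → V := fun n => if n = 0 then w else e (Nat.unpair (n - 1)).1
  have hα0 : α 0 = w := rfl
  have hhit : ∀ (v : V) (N : ℕ), ∃ n, N ≤ n ∧ α n = v := by
    intro v N
    obtain ⟨a, ha⟩ := he v
    refine ⟨Nat.pair a N + 1, ?_, ?_⟩
    · have := Nat.right_le_pair a N; omega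
    · show (if Nat.pair a N + 1 = 0 then w else e (Nat.unpair (Nat.pair a N + 1 - 1)).1) = v
      simp [Nat.unpair_pair, ha]
  have hαsurj : Function.Surjective α := fun v => by
    obtain ⟨n, _, hn⟩ := hhit v 0; exact ⟨n, hn⟩
  -- the profile sequence
  set σ : ℕ → V → CStrat := profileSeq G v₀ α with hσdef
  have hσ0A : σ 0 v₀ = CStrat.A := by
    show (if v₀ = v₀ then CStrat.A else CStrat.B) = CStrat.A
    simp
  have hσ0B : ∀ v, v ≠ v₀ → σ 0 v = CStrat.B := by
    intro v hv
    show (if v = v₀ then CStrat.A else CStrat.B) = CStrat.B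
    simp [hv]
  have hupd_other : ∀ n v, v ≠ α n → σ (n + 1) v = σ n v := by
    intro n v hv
    show nextProfile G (σ n) (α n) v = σ n v
    simp [nextProfile, hv]
  have hupd_self : ∀ n, σ (n + 1) (α n)
      = (if ∃ u ∈ G.neighborSet (α n), σ n u = CStrat.A then CStrat.A else CStrat.B) := by
    intro n
    show nextProfile G (σ n) (α n) (α n) = _
    simp [nextProfile]
  have hupdA : ∀ n, (∃ u ∈ G.neighborSet (α n), σ n u = CStrat.A) →
      σ (n + 1) (α n) = CStrat.A := by
    intro n h; rw [hupd_self n, if_pos h]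
  have hupdA' : ∀ n, σ (n + 1) (α n) = CStrat.A →
      ∃ u ∈ G.neighborSet (α n), σ n u = CStrat.A := by
    intro n h
    by_contra hc
    rw [hupd_self n, if_neg hc] at h
    exact absurd h (by simp)
  -- the invariant: from time 1 on, every A-vertex has an A-neighbor
  have Inv : ∀ n, 1 ≤ n → ∀ v, σ n v = CStrat.A →
      ∃ u ∈ G.neighborSet v, σ n u = CStrat.A := by
    intro n
    induction n with
    | zero => omega
    | succ n ih =>
      intro _
      rcases Nat.eq_zero_or_pos n with hn0 | hn1
      · subst hn0
        -- base case: time 1, α 0 = w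
        have hσ1w : σ 1 w = CStrat.A := by
          rw [← hα0]
          exact hupdA 0 ⟨v₀, by rw [hα0]; exact hadj.symm, hσ0A⟩
        have hσ1v₀ : σ 1 v₀ = CStrat.A := by
          rw [hupd_other 0 v₀ (by rw [hα0]; exact hwne.symm)]
          exact hσ0A
        intro v hv
        by_cases hvw : v = w
        · subst hvw
          exact ⟨v₀, hadj.symm, hσ1v₀⟩
        · have := hupd_other 0 v (by rw [hα0]; exact hvw)
          rw [this] at hv
          have hvv₀ : v = v₀ := by
            by_contra hne
            rw [hσ0B v hne] at hv
            exact absurd hv (by simp)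
          subst hvv₀
          exact ⟨w, hw, hσ1w⟩
      · -- inductive step, n ≥ 1
        have ihn := ih hn1
        have monoStep : ∀ v, σ n v = CStrat.A → σ (n + 1) v = CStrat.A := by
          intro v hv
          by_cases hvx : v = α n
          · obtain ⟨u, hu, huA⟩ := ihn v hv
            rw [hvx]
            exact hupdA n ⟨u, hvx ▸ hu, huA⟩
          · rw [hupd_other n v hvx]; exact hv
        intro v hv
        by_cases hvx : v = α n
        · subst hvx
          obtain ⟨u, hu, huA⟩ := hupdA' n hv
          exact ⟨u, hu, monoStep u huA⟩
        · rw [hupd_other n v hvx] at hv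
          obtain ⟨u, hu, huA⟩ := ihn v hv
          exact ⟨u, hu, monoStep u huA⟩
  -- monotonicity of A
  have mono1 : ∀ n v, σ n v = CStrat.A → σ (n + 1) v = CStrat.A := by
    intro n
    rcases Nat.eq_zero_or_pos n with hn0 | hn1
    · subst hn0
      intro v hv
      have hvv₀ : v = v₀ := by
        by_contra hne
        rw [hσ0B v hne] at hv
        exact absurd hv (by simp)
      rw [hvv₀, hupd_other 0 v₀ (by rw [hα0]; exact hwne.symm)]
      exact hσ0A
    · intro v hv
      by_cases hvx : v = α n
      · obtain ⟨u, hu, huA⟩ := Inv n hn1 v hv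
        rw [hvx]
        exact hupdA n ⟨u, hvx ▸ hu, huA⟩
      · rw [hupd_other n v hvx]; exact hv
  have mono : ∀ n m, n ≤ m → ∀ v, σ n v = CStrat.A → σ m v = CStrat.A := by
    intro n m hnm
    induction m, hnm using Nat.le_induction with
    | base => exact fun v hv => hv
    | succ m _ ih => exact fun v hv => mono1 m v (ih v hv)
  -- every vertex is eventually A
  have heventual : ∀ v, ∃ n, σ n v = CStrat.A := by
    have hstep : ∀ u b : V, G.Adj u b → (∃ n, σ n b = CStrat.A) → ∃ n, σ n u = CStrat.A := by
      intro u b h hb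
      obtain ⟨n, hn⟩ := hb
      obtain ⟨m, hm, hmv⟩ := hhit u n
      refine ⟨m + 1, ?_⟩
      rw [← hmv]
      exact hupdA m ⟨b, hmv ▸ h, mono n m hm b hn⟩
    intro v
    exact (hConn v v₀).elim fun p =>
      aux_walk_prop G (fun x => ∃ n, σ n x = CStrat.A) hstep p ⟨0, hσ0A⟩
  -- best responses
  have hbr : ∀ n, CIsBestResponse G q (σ n) (α n) (σ (n + 1) (α n)) := by
    intro n
    by_cases hA : ∃ u ∈ G.neighborSet (α n), σ n u = CStrat.A
    · rw [hupd_self n, if_pos hA]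
      exact aux_bestResponse_A G (σ n) (α n) hΔ1 (hReg (α n)) hq0.le hqΔ hA
    · rw [hupd_self n, if_neg hA]
      exact aux_bestResponse_B G (σ n) (α n) hΔ1 (hReg (α n)) hq0.le hA
  -- assemble
  have main : CoordEpidemicFrom G q ({v₀} : Set V) := by
    refine ⟨α, σ, hαsurj, ?_, ?_, hbr, hupd_other, heventual⟩
    · intro v hv
      rw [Set.mem_singleton_iff] at hv
      subst hv; exact hσ0A
    · intro v hv
      rw [Set.mem_singleton_iff] at hv
      exact hσ0B v hv
  exact ⟨⟨{v₀}, Set.finite_singleton _, main⟩, v₀, main⟩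

end Contagion
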